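/- Let m, d be positive integers with m ≤ d and let ε ∈ (0, 1/2]. There exists a finite set N ⊆ S^{m−1} of cardinality at most (3/ε)^m such that for every matrix W ∈ ℝ^{m×d} and every nonzero u ∈ ℝ^d: if s_m(W) > 0 then ‖P_W u‖/‖u‖ ≤ ( sup_{v ∈ N} |uᵀ Wᵀ v| / ‖u‖ + ε ‖W‖_op ) / s_m(W); moreover, if inf_{v ∈ N} ‖Wᵀ v‖ − ε ‖W‖_op > 0, then also ‖P_W u‖/‖u‖ ≤ ( sup_{v ∈ N} |uᵀ Wᵀ v| / ‖u‖ + ε ‖W‖_op ) / ( inf_{v ∈ N} ‖Wᵀ v‖ − ε ‖W‖_op ). -/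

import Mathlib

open MeasureTheory Metric
open scoped ENNReal

noncomputable section

/-- Euclidean norm on `Fin n → ℝ`. -/
def euclNorm {n : ℕ} (v : Fin n → ℝ) : ℝ := Real.sqrt (∑ i, v i ^ 2)

/-- Euclidean inner product on `Fin n → ℝ`. -/
def dotp {n : ℕ} (v w : Fin n → ℝ) : ℝ := ∑ i, v i * w i

/-- Operator (spectral) norm of a matrix, via the Euclidean norms. -/
def opNorm {m d : ℕ} (M : Matrix (Fin m) (Fin d) ℝ) : ℝ :=
  sSup {r : ℝ | ∃ v : Fin d → ℝ, euclNorm v ≤ 1 ∧ r = euclNorm (M.mulVec v)}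

/-- Smallest singular value `s_m(W) = inf_{‖v‖=1} ‖Wᵀ v‖` of `W : ℝ^{m×d}`. -/
def smallestSV {m d : ℕ} (W : Matrix (Fin m) (Fin d) ℝ) : ℝ :=
  sInf {r : ℝ | ∃ v : Fin m → ℝ, euclNorm v = 1 ∧ r = euclNorm (W.transpose.mulVec v)}

/-- Row span of a matrix, inside `EuclideanSpace ℝ (Fin d)`. -/
def rowSpan {m d : ℕ} (W : Matrix (Fin m) (Fin d) ℝ) :
    Submodule ℝ (EuclideanSpace ℝ (Fin d)) :=
  Submodule.span ℝ (Set.range fun i => (WithLp.equiv 2 (Fin d → ℝ)).symm (W i))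

/-- The `d × d` orthogonal projection matrix onto the row span of `W`. -/
def projMat {m d : ℕ} (W : Matrix (Fin m) (Fin d) ℝ) : Matrix (Fin d) (Fin d) ℝ :=
  fun i j =>
    ((rowSpan W).orthogonalProjectionOnto (EuclideanSpace.single j 1) : EuclideanSpace ℝ (Fin d)) i

abbrev ee {n : ℕ} (v : Fin n → ℝ) : EuclideanSpace ℝ (Fin n) := (WithLp.equiv 2 (Fin n → ℝ)).symm v

lemma euclNorm_eq {n : ℕ} (v : Fin n → ℝ) : euclNorm v = ‖ee v‖ := by
  rw [EuclideanSpace.norm_eq]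
  simp [euclNorm, Real.norm_eq_abs, sq_abs]

lemma dotp_eq_inner {n : ℕ} (v w : Fin n → ℝ) : dotp v w = inner ℝ (ee v) (ee w) := by
  simp [dotp, PiLp.inner_apply, RCLike.inner_apply, mul_comm]

lemma abs_dotp_le {n : ℕ} (v w : Fin n → ℝ) : |dotp v w| ≤ euclNorm v * euclNorm w := by
  rw [dotp_eq_inner, euclNorm_eq, euclNorm_eq]
  exact abs_real_inner_le_norm _ _

lemma euclNorm_nonneg {n : ℕ} (v : Fin n → ℝ) : 0 ≤ euclNorm v := Real.sqrt_nonneg _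

lemma euclNorm_zero {n : ℕ} : euclNorm (0 : Fin n → ℝ) = 0 := by simp [euclNorm]

lemma euclNorm_eq_zero {n : ℕ} {v : Fin n → ℝ} (h : euclNorm v = 0) : v = 0 := by
  rw [euclNorm_eq] at h
  have := norm_eq_zero.1 h
  exact congrArg (WithLp.equiv 2 (Fin n → ℝ)) this

lemma euclNorm_smul {n : ℕ} (c : ℝ) (v : Fin n → ℝ) : euclNorm (c • v) = |c| * euclNorm v := by
  rw [euclNorm_eq, euclNorm_eq]
  have : ee (c • v) = c • ee v := rfl
  rw [this, norm_smul, Real.norm_eq_abs]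

lemma euclNorm_sub_le {n : ℕ} (v w : Fin n → ℝ) : euclNorm (v - w) ≤ euclNorm v + euclNorm w := by
  rw [euclNorm_eq, euclNorm_eq, euclNorm_eq]
  exact norm_sub_le _ _

lemma dotp_smul_right {n : ℕ} (c : ℝ) (v w : Fin n → ℝ) : dotp v (c • w) = c * dotp v w := by
  simp only [dotp, Finset.mul_sum, Pi.smul_apply, smul_eq_mul]
  exact Finset.sum_congr rfl fun i _ => by ring

-- opNorm facts
lemma opNorm_bddAbove {m d : ℕ} (M : Matrix (Fin m) (Fin d) ℝ) :
    BddAbove {r : ℝ | ∃ v : Fin d → ℝ, euclNorm v ≤ 1 ∧ r = euclNorm (M.mulVec v)} := by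
  classical
  obtain ⟨L, hL⟩ : ∃ L : EuclideanSpace ℝ (Fin d) →L[ℝ] EuclideanSpace ℝ (Fin m),
      ∀ v : Fin d → ℝ, euclNorm (M.mulVec v) = ‖L (ee v)‖ := by
    refine ⟨LinearMap.toContinuousLinearMap (Matrix.toEuclideanLin M), fun v => ?_⟩
    rw [euclNorm_eq]
    rfl
  refine ⟨‖L‖, fun r hr => ?_⟩
  obtain ⟨v, hv1, rfl⟩ := hr
  rw [hL v]
  calc ‖L (ee v)‖ ≤ ‖L‖ * ‖ee v‖ := L.le_opNorm _
  _ ≤ ‖L‖ * 1 := by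
      have : ‖ee v‖ = euclNorm v := (euclNorm_eq v).symm
      exact mul_le_mul_of_nonneg_left (by rw [this]; exact hv1) (norm_nonneg _)
  _ = ‖L‖ := mul_one _

lemma opNorm_nonneg {m d : ℕ} (M : Matrix (Fin m) (Fin d) ℝ) : 0 ≤ opNorm M := by
  have h0 : (0:ℝ) ∈ {r : ℝ | ∃ v : Fin d → ℝ, euclNorm v ≤ 1 ∧ r = euclNorm (M.mulVec v)} :=
    ⟨0, by simp [euclNorm_zero], by simp [Matrix.mulVec_zero, euclNorm_zero]⟩
  exact le_csSup (opNorm_bddAbove M) h0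

lemma mulVec_le_opNorm {m d : ℕ} (M : Matrix (Fin m) (Fin d) ℝ) (v : Fin d → ℝ) :
    euclNorm (M.mulVec v) ≤ opNorm M * euclNorm v := by
  rcases eq_or_ne v 0 with rfl | hv
  · simp [Matrix.mulVec_zero, euclNorm_zero]
  · have hn : 0 < euclNorm v := by
      rcases (euclNorm_nonneg v).lt_or_eq with h | h
      · exact h
      · exact absurd (euclNorm_eq_zero h.symm) hv
    have hmem : euclNorm (M.mulVec ((euclNorm v)⁻¹ • v)) ∈
        {r : ℝ | ∃ w : Fin d → ℝ, euclNorm w ≤ 1 ∧ r = euclNorm (M.mulVec w)} := by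
      refine ⟨_, ?_, rfl⟩
      rw [euclNorm_smul, abs_of_nonneg (by positivity), inv_mul_cancel₀ hn.ne']
    have h1 : euclNorm (M.mulVec ((euclNorm v)⁻¹ • v)) ≤ opNorm M :=
      le_csSup (opNorm_bddAbove M) hmem
    rw [Matrix.mulVec_smul, euclNorm_smul, abs_of_nonneg (by positivity)] at h1
    calc euclNorm (M.mulVec v) = euclNorm v * ((euclNorm v)⁻¹ * euclNorm (M.mulVec v)) := by
          field_simp
    _ ≤ euclNorm v * opNorm M := mul_le_mul_of_nonneg_left h1 hn.le
    _ = opNorm M * euclNorm v := mul_comm _ _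

lemma dotp_self {n : ℕ} (v : Fin n → ℝ) : dotp v v = euclNorm v ^ 2 := by
  rw [euclNorm, Real.sq_sqrt (by positivity)]
  simp [dotp, sq]

lemma dotp_transpose {m d : ℕ} (M : Matrix (Fin m) (Fin d) ℝ) (u : Fin d → ℝ) (v : Fin m → ℝ) :
    dotp u (M.transpose.mulVec v) = dotp (M.mulVec u) v := by
  change dotProduct u (M.transpose.mulVec v) = dotProduct (M.mulVec u) v
  rw [Matrix.dotProduct_mulVec, Matrix.vecMul_transpose, dotProduct_comm]

lemma transpose_mulVec_le_opNorm {m d : ℕ} (M : Matrix (Fin m) (Fin d) ℝ) (v : Fin m → ℝ) :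
    euclNorm (M.transpose.mulVec v) ≤ opNorm M * euclNorm v := by
  set a := M.transpose.mulVec v with ha
  rcases (euclNorm_nonneg a).eq_or_lt with h | h
  · rw [← h]
    have := opNorm_nonneg M
    have := euclNorm_nonneg v
    positivity
  · have key : euclNorm a ^ 2 ≤ opNorm M * euclNorm v * euclNorm a := by
      calc euclNorm a ^ 2 = dotp a a := (dotp_self a).symm
      _ = dotp (M.mulVec a) v := by rw [ha]; rw [dotp_transpose]
      _ ≤ |dotp (M.mulVec a) v| := le_abs_self _
      _ ≤ euclNorm (M.mulVec a) * euclNorm v := abs_dotp_le _ _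
      _ ≤ opNorm M * euclNorm a * euclNorm v :=
          mul_le_mul_of_nonneg_right (mulVec_le_opNorm M a) (euclNorm_nonneg v)
      _ = opNorm M * euclNorm v * euclNorm a := by ring
    nlinarith [key, h]


-- packing bound
lemma separated_card_le (m : ℕ) (hm : 0 < m) (ε : ℝ) (hε0 : 0 < ε) (hε1 : ε ≤ 1)
    (F : Finset (EuclideanSpace ℝ (Fin m)))
    (hF1 : ∀ x ∈ F, ‖x‖ = 1)
    (hsep : ∀ x ∈ F, ∀ y ∈ F, x ≠ y → ε < dist x y) :
    (F.card : ℝ) ≤ (3 / ε) ^ m := by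
  classical
  have : Nonempty (Fin m) := ⟨⟨0, hm⟩⟩
  have hfr : Module.finrank ℝ (EuclideanSpace ℝ (Fin m)) = m := finrank_euclideanSpace_fin
  set μ : Measure (EuclideanSpace ℝ (Fin m)) := volume
  have hdisj : (F : Set (EuclideanSpace ℝ (Fin m))).PairwiseDisjoint (fun x : EuclideanSpace ℝ (Fin m) => ball x (ε / 2)) := by
    intro x hx y hy hxy
    refine Set.disjoint_left.2 fun z hzx hzy => ?_
    have := hsep x hx y hy hxy
    have hd : dist x y < ε := by
      calc dist x y ≤ dist x z + dist z y := dist_triangle _ _ _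
      _ < ε / 2 + ε / 2 := by
          rw [mem_ball] at hzx hzy
          rw [dist_comm x z]
          exact add_lt_add hzx hzy
      _ = ε := by ring
    linarith
  have hsub : (⋃ x ∈ F, ball x (ε / 2)) ⊆ ball (0 : EuclideanSpace ℝ (Fin m)) (1 + ε / 2) := by
    intro z hz
    simp only [Set.mem_iUnion] at hz
    obtain ⟨x, hx, hzx⟩ := hz
    rw [mem_ball] at hzx ⊢
    calc dist z 0 ≤ dist z x + dist x 0 := dist_triangle _ _ _
    _ < ε / 2 + 1 := by
        have : dist x 0 = 1 := by rw [dist_zero_right]; exact hF1 x hx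
        rw [this]; linarith
    _ = 1 + ε / 2 := by ring
  have hμball : ∀ x : EuclideanSpace ℝ (Fin m), μ (ball x (ε / 2)) = ENNReal.ofReal ((ε/2) ^ m) * μ (ball 0 1) := by
    intro x
    rw [Measure.addHaar_ball μ x (by linarith : (0:ℝ) ≤ ε/2), hfr]
  have hsum : (F.card : ℝ≥0∞) * (ENNReal.ofReal ((ε/2) ^ m) * μ (ball 0 1))
      ≤ ENNReal.ofReal ((1 + ε/2) ^ m) * μ (ball 0 1) := by
    calc (F.card : ℝ≥0∞) * (ENNReal.ofReal ((ε/2) ^ m) * μ (ball 0 1))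
        = ∑ x ∈ F, μ (ball x (ε/2)) := by
          rw [Finset.sum_congr rfl fun x _ => hμball x, Finset.sum_const, nsmul_eq_mul]
    _ = μ (⋃ x ∈ F, ball x (ε/2)) := (measure_biUnion_finset hdisj fun x _ => measurableSet_ball).symm
    _ ≤ μ (ball (0:EuclideanSpace ℝ (Fin m)) (1 + ε/2)) := measure_mono hsub
    _ = ENNReal.ofReal ((1 + ε/2) ^ m) * μ (ball 0 1) := by
        rw [Measure.addHaar_ball μ _ (by linarith : (0:ℝ) ≤ 1 + ε/2), hfr]
  have hpos : 0 < μ (ball (0:EuclideanSpace ℝ (Fin m)) 1) := measure_ball_pos μ _ one_pos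
  have hlt : μ (ball (0:EuclideanSpace ℝ (Fin m)) 1) < ⊤ := measure_ball_lt_top
  rw [← mul_assoc, ENNReal.mul_le_mul_iff_left hpos.ne' hlt.ne] at hsum
  have hε2 : (0:ℝ) < (ε/2) ^ m := by positivity
  have h2 : (F.card : ℝ) * (ε/2) ^ m ≤ (1 + ε/2) ^ m := by
    have := (ENNReal.ofReal_le_ofReal_iff (by positivity)).2 (le_refl ((1 + ε/2)^m))
    have h3 : ENNReal.ofReal ((F.card : ℝ) * (ε/2)^m) ≤ ENNReal.ofReal ((1 + ε/2)^m) := by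
      rw [ENNReal.ofReal_mul (by positivity)]
      simpa [ENNReal.ofReal_natCast] using hsum
    exact (ENNReal.ofReal_le_ofReal_iff (by positivity)).1 h3
  have hfinal : (F.card : ℝ) ≤ ((1 + ε/2) / (ε/2)) ^ m := by
    rw [div_pow, le_div_iff₀ hε2]
    exact h2
  refine hfinal.trans (pow_le_pow_left₀ (by positivity) ?_ m)
  rw [div_le_div_iff₀ (by linarith) hε0]
  nlinarith

lemma net_exists_eucl (m : ℕ) (hm : 0 < m) (ε : ℝ) (hε0 : 0 < ε) (hε1 : ε ≤ 1) :
    ∃ N : Finset (EuclideanSpace ℝ (Fin m)),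
      (N.card : ℝ) ≤ (3 / ε) ^ m ∧ (∀ x ∈ N, ‖x‖ = 1) ∧
      ∀ y : EuclideanSpace ℝ (Fin m), ‖y‖ = 1 → ∃ x ∈ N, dist y x ≤ ε := by
  classical
  set P : Finset (EuclideanSpace ℝ (Fin m)) → Prop :=
    fun F => (∀ x ∈ F, ‖x‖ = 1) ∧ ∀ x ∈ F, ∀ y ∈ F, x ≠ y → ε < dist x y with hP
  set s : Set ℕ := {n | ∃ F, P F ∧ n = F.card} with hs
  have hsne : s.Nonempty := ⟨0, ∅, ⟨by simp, by simp⟩, rfl⟩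
  have hbdd : BddAbove s := by
    refine ⟨Nat.floor ((3/ε)^m), fun n hn => ?_⟩
    obtain ⟨F, hF, rfl⟩ := hn
    exact Nat.le_floor (separated_card_le m hm ε hε0 hε1 F hF.1 hF.2)
  obtain ⟨F, hF, hcard⟩ := Nat.sSup_mem hsne hbdd
  refine ⟨F, ?_, hF.1, ?_⟩
  · exact separated_card_le m hm ε hε0 hε1 F hF.1 hF.2
  · intro y hy
    by_contra hcon
    push_neg at hcon
    have hyF : y ∉ F := fun hyF => by
      have := hcon y hyF
      simp at this
      linarith
    have hP' : P (insert y F) := by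
      constructor
      · intro x hx
        rcases Finset.mem_insert.1 hx with rfl | hx
        · exact hy
        · exact hF.1 x hx
      · intro x hx z hz hxz
        rcases Finset.mem_insert.1 hx with hx' | hx' <;>
          rcases Finset.mem_insert.1 hz with hz' | hz'
        · exact absurd (hx'.trans hz'.symm) hxz
        · subst hx'; exact hcon z hz'
        · subst hz'; rw [dist_comm]; exact hcon x hx'
        · exact hF.2 x hx' z hz' hxz
    have : F.card + 1 ∈ s := ⟨insert y F, hP', (Finset.card_insert_of_notMem hyF).symm⟩
    have := le_csSup hbdd this
    omega

lemma net_exists (m : ℕ) (hm : 0 < m) (ε : ℝ) (hε0 : 0 < ε) (hε1 : ε ≤ 1) :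
    ∃ N : Finset (Fin m → ℝ),
      (N.card : ℝ) ≤ (3 / ε) ^ m ∧ (∀ v ∈ N, euclNorm v = 1) ∧
      ∀ v : Fin m → ℝ, euclNorm v = 1 → ∃ v' ∈ N, euclNorm (v - v') ≤ ε := by
  classical
  obtain ⟨N', h1, h2, h3⟩ := net_exists_eucl m hm ε hε0 hε1
  refine ⟨N'.image (WithLp.equiv 2 (Fin m → ℝ)), ?_, ?_, ?_⟩
  · refine le_trans ?_ h1
    exact_mod_cast Finset.card_image_le
  · intro v hv
    obtain ⟨x, hx, rfl⟩ := Finset.mem_image.1 hv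
    rw [euclNorm_eq]
    have : ee ((WithLp.equiv 2 (Fin m → ℝ)) x) = x := (WithLp.equiv 2 (Fin m → ℝ)).symm_apply_apply x
    rw [this]
    exact h2 x hx
  · intro v hv
    obtain ⟨x, hx, hdx⟩ := h3 (ee v) (by rw [← euclNorm_eq]; exact hv)
    refine ⟨(WithLp.equiv 2 (Fin m → ℝ)) x, Finset.mem_image_of_mem _ hx, ?_⟩
    rw [euclNorm_eq]
    have h4 : ee (v - (WithLp.equiv 2 (Fin m → ℝ)) x) = ee v - x := by
      have : ee ((WithLp.equiv 2 (Fin m → ℝ)) x) = x := (WithLp.equiv 2 (Fin m → ℝ)).symm_apply_apply x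
      rw [← this]; rfl
    rw [h4, ← dist_eq_norm]
    exact hdx

lemma eu_sum {d : ℕ} (u : Fin d → ℝ) :
    ee u = ∑ j, u j • EuclideanSpace.single j (1:ℝ) := by
  apply PiLp.ext
  intro i
  rw [show ((∑ j, u j • EuclideanSpace.single j (1:ℝ)) i) = ∑ j, (u j • EuclideanSpace.single j (1:ℝ)) i from
    by simp only [WithLp.ofLp_sum, Finset.sum_apply]]
  simp [EuclideanSpace.single_apply]

lemma projMat_mulVec {m d : ℕ} (W : Matrix (Fin m) (Fin d) ℝ) (u : Fin d → ℝ) :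
    ee ((projMat W).mulVec u)
      = ((rowSpan W).orthogonalProjectionOnto (ee u) : EuclideanSpace ℝ (Fin d)) := by
  apply PiLp.ext
  intro i
  have : (rowSpan W).orthogonalProjectionOnto (ee u)
      = ∑ j, u j • (rowSpan W).orthogonalProjectionOnto (EuclideanSpace.single j (1:ℝ)) := by
    rw [eu_sum u, map_sum]
    exact Finset.sum_congr rfl fun j _ => by rw [_root_.map_smul]
  rw [this]
  push_cast [Submodule.coe_sum]
  rw [show ((∑ j, u j • ((rowSpan W).orthogonalProjectionOnto (EuclideanSpace.single j (1:ℝ)) : EuclideanSpace ℝ (Fin d))) i)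
      = ∑ j, (u j • ((rowSpan W).orthogonalProjectionOnto (EuclideanSpace.single j (1:ℝ)) : EuclideanSpace ℝ (Fin d))) i from
    by simp only [WithLp.ofLp_sum, Finset.sum_apply]]
  simp only [PiLp.smul_apply, smul_eq_mul]
  show (projMat W).mulVec u i = _
  simp [Matrix.mulVec, dotProduct, projMat, mul_comm]

lemma dotp_add_right {n : ℕ} (u a b : Fin n → ℝ) : dotp u (a + b) = dotp u a + dotp u b := by
  simp [dotp, mul_add, Finset.sum_add_distrib]

lemma rowSpan_coeffs {m d : ℕ} (W : Matrix (Fin m) (Fin d) ℝ)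
    {p : EuclideanSpace ℝ (Fin d)} (hp : p ∈ rowSpan W) :
    ∃ c : Fin m → ℝ, ee (W.transpose.mulVec c) = p := by
  obtain ⟨c, hc⟩ := (Submodule.mem_span_range_iff_exists_fun ℝ).1 hp
  refine ⟨c, ?_⟩
  rw [← hc]
  apply PiLp.ext
  intro j
  rw [show ((∑ i, c i • ee (W i)) j) = ∑ i, (c i • ee (W i)) j from
    by simp only [WithLp.ofLp_sum, Finset.sum_apply]]
  simp only [PiLp.smul_apply, smul_eq_mul]
  show W.transpose.mulVec c j = _
  simp [Matrix.mulVec, dotProduct, Matrix.transpose_apply, mul_comm]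

lemma exists_unit_vec (m : ℕ) (hm : 0 < m) : ∃ v : Fin m → ℝ, euclNorm v = 1 := by
  refine ⟨Pi.single ⟨0, hm⟩ 1, ?_⟩
  rw [euclNorm_eq]
  have : ee (Pi.single ⟨0, hm⟩ (1:ℝ)) = EuclideanSpace.single ⟨0, hm⟩ (1:ℝ) := rfl
  rw [this, EuclideanSpace.norm_single, norm_one]

/-- covering argument controlling `‖P_W u‖ / ‖u‖` via an ε-net of the
unit sphere in `ℝ^m`. -/
theorem statement6 (m d : ℕ) (hm : 0 < m) (hd : 0 < d)
    (ε : ℝ) (hε0 : 0 < ε) (hε : ε ≤ 1 / 2) :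
    ∃ N : Finset (Fin m → ℝ),
      (N.card : ℝ) ≤ (3 / ε) ^ m ∧
      (∀ v ∈ N, euclNorm v = 1) ∧
      ∀ (W : Matrix (Fin m) (Fin d) ℝ) (u : Fin d → ℝ), u ≠ 0 →
        (0 < smallestSV W →
          euclNorm ((projMat W).mulVec u) / euclNorm u
            ≤ (sSup ((fun v => |dotp u (W.transpose.mulVec v)|) '' (N : Set (Fin m → ℝ)))
                  / euclNorm u + ε * opNorm W) / smallestSV W) ∧
        (0 < sInf ((fun v => euclNorm (W.transpose.mulVec v)) '' (N : Set (Fin m → ℝ)))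
              - ε * opNorm W →
          euclNorm ((projMat W).mulVec u) / euclNorm u
            ≤ (sSup ((fun v => |dotp u (W.transpose.mulVec v)|) '' (N : Set (Fin m → ℝ)))
                  / euclNorm u + ε * opNorm W)
              / (sInf ((fun v => euclNorm (W.transpose.mulVec v)) '' (N : Set (Fin m → ℝ)))
                  - ε * opNorm W)) := by
  classical
  obtain ⟨N, hcard, hunit, hnet⟩ := net_exists m hm ε hε0 (by linarith)
  obtain ⟨v₀, hv₀⟩ := exists_unit_vec m hm
  obtain ⟨w₀, hw₀, -⟩ := hnet v₀ hv₀
  have hNne : N.Nonempty := ⟨w₀, hw₀⟩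
  refine ⟨N, hcard, hunit, ?_⟩
  intro W u hu
  set op := opNorm W with hop
  have hopnn : 0 ≤ op := opNorm_nonneg W
  set nu := euclNorm u with hnu
  have hnu0 : 0 < nu := by
    rcases (euclNorm_nonneg u).eq_or_lt with h | h
    · exact absurd (euclNorm_eq_zero h.symm) hu
    · exact h
  set S := sSup ((fun v => |dotp u (W.transpose.mulVec v)|) '' (N : Set (Fin m → ℝ))) with hS
  have hSbdd : BddAbove ((fun v => |dotp u (W.transpose.mulVec v)|) '' (N : Set (Fin m → ℝ))) :=
    (N.finite_toSet.image _).bddAbove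
  have hSle : ∀ v' ∈ N, |dotp u (W.transpose.mulVec v')| ≤ S :=
    fun v' hv' => le_csSup hSbdd ⟨v', hv', rfl⟩
  have hS0 : 0 ≤ S := le_trans (abs_nonneg _) (hSle w₀ hw₀)
  -- key : uniform bound on the sphere
  have hdot : ∀ v : Fin m → ℝ, euclNorm v = 1 →
      |dotp u (W.transpose.mulVec v)| ≤ S + ε * op * nu := by
    intro v hv
    obtain ⟨v', hv', hvv'⟩ := hnet v hv
    have hsplit : W.transpose.mulVec v
        = W.transpose.mulVec v' + W.transpose.mulVec (v - v') := by
      have hvv : v' + (v - v') = v := by abel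
      rw [← Matrix.mulVec_add, hvv]
    have h2 : |dotp u (W.transpose.mulVec (v - v'))| ≤ ε * op * nu := by
      rw [dotp_transpose]
      calc |dotp (W.mulVec u) (v - v')| ≤ euclNorm (W.mulVec u) * euclNorm (v - v') :=
            abs_dotp_le _ _
      _ ≤ (op * nu) * ε := by
          apply mul_le_mul (mulVec_le_opNorm W u) hvv' (euclNorm_nonneg _) (by positivity)
      _ = ε * op * nu := by ring
    calc |dotp u (W.transpose.mulVec v)|
        = |dotp u (W.transpose.mulVec v') + dotp u (W.transpose.mulVec (v - v'))| := by
          rw [hsplit, dotp_add_right]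
    _ ≤ |dotp u (W.transpose.mulVec v')| + |dotp u (W.transpose.mulVec (v - v'))| := abs_add_le _ _
    _ ≤ S + ε * op * nu := add_le_add (hSle v' hv') h2
  -- smallest singular value lower bounds
  have hsvBddBelow : BddBelow {r : ℝ | ∃ v : Fin m → ℝ, euclNorm v = 1
      ∧ r = euclNorm (W.transpose.mulVec v)} := by
    refine ⟨0, fun r hr => ?_⟩
    obtain ⟨v, hv, rfl⟩ := hr
    exact euclNorm_nonneg _
  have hsv_le : ∀ v : Fin m → ℝ, euclNorm v = 1 → smallestSV W ≤ euclNorm (W.transpose.mulVec v) :=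
    fun v hv => csInf_le hsvBddBelow ⟨v, hv, rfl⟩
  -- core bound
  have hcore : 0 < smallestSV W →
      euclNorm ((projMat W).mulVec u) ≤ (S + ε * op * nu) / smallestSV W := by
    intro hs
    set p : EuclideanSpace ℝ (Fin d) :=
      ((rowSpan W).orthogonalProjectionOnto (ee u) : EuclideanSpace ℝ (Fin d)) with hpdef
    have hnorm : euclNorm ((projMat W).mulVec u) = ‖p‖ := by
      rw [euclNorm_eq, projMat_mulVec]
    rcases eq_or_ne p 0 with hp0 | hp0
    · rw [hnorm, hp0, norm_zero]
      positivity
    · have hnp : 0 < ‖p‖ := norm_pos_iff.2 hp0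
      have hpmem : p ∈ rowSpan W := ((rowSpan W).orthogonalProjectionOnto (ee u)).2
      obtain ⟨c, hc⟩ := rowSpan_coeffs W hpmem
      -- inner product identity
      have hinner : dotp u (W.transpose.mulVec c) = ‖p‖ ^ 2 := by
        rw [dotp_eq_inner, hc]
        have hmem' : ee u - p ∈ (rowSpan W)ᗮ := by exact Submodule.sub_starProjection_mem_orthogonal (K := rowSpan W) (ee u)
        have h0 : inner ℝ p (ee u - p) = (0:ℝ) := hmem' p hpmem
        have h2 : ee u = (ee u - p) + p := by abel
        have h1 : (inner ℝ (ee u) p : ℝ) = (inner ℝ p (ee u - p) : ℝ) + (inner ℝ p p : ℝ) := by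
          rw [real_inner_comm p (ee u)]
          conv_lhs => rw [h2]
          rw [inner_add_right]
        rw [h1, h0, zero_add, real_inner_self_eq_norm_sq]
      have hcnorm : euclNorm (W.transpose.mulVec c) = ‖p‖ := by
        rw [euclNorm_eq, hc]
      have hc0 : c ≠ 0 := by
        intro h
        rw [h, Matrix.mulVec_zero] at hcnorm
        rw [euclNorm_zero] at hcnorm
        exact hnp.ne hcnorm
      have ht : 0 < euclNorm c := by
        rcases (euclNorm_nonneg c).eq_or_lt with h | h
        · exact absurd (euclNorm_eq_zero h.symm) hc0
        · exact h
      set t := euclNorm c with htdef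
      set v := t⁻¹ • c with hvdef
      have hvunit : euclNorm v = 1 := by
        rw [hvdef, euclNorm_smul, abs_of_nonneg (by positivity), ← htdef,
          inv_mul_cancel₀ ht.ne']
      have hcv : c = t • v := by
        rw [hvdef, smul_inv_smul₀ ht.ne']
      -- t * s ≤ ‖p‖
      have hts : t * smallestSV W ≤ ‖p‖ := by
        have h1 : smallestSV W ≤ euclNorm (W.transpose.mulVec v) := hsv_le v hvunit
        have h2 : euclNorm (W.transpose.mulVec c) = t * euclNorm (W.transpose.mulVec v) := by
          rw [hcv, Matrix.mulVec_smul, euclNorm_smul, abs_of_nonneg ht.le]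
        calc t * smallestSV W ≤ t * euclNorm (W.transpose.mulVec v) :=
            mul_le_mul_of_nonneg_left h1 ht.le
        _ = euclNorm (W.transpose.mulVec c) := h2.symm
        _ = ‖p‖ := hcnorm
      -- ‖p‖² ≤ t * (S + ε op nu)
      have hsq : ‖p‖ ^ 2 ≤ t * (S + ε * op * nu) := by
        have h1 : dotp u (W.transpose.mulVec c) = t * dotp u (W.transpose.mulVec v) := by
          rw [hcv, Matrix.mulVec_smul, dotp_smul_right]
        have h2 : dotp u (W.transpose.mulVec v) ≤ S + ε * op * nu :=
          le_trans (le_abs_self _) (hdot v hvunit)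
        calc ‖p‖ ^ 2 = t * dotp u (W.transpose.mulVec v) := by rw [← hinner, h1]
        _ ≤ t * (S + ε * op * nu) := mul_le_mul_of_nonneg_left h2 ht.le
      have hB : 0 ≤ S + ε * op * nu := by positivity
      rw [hnorm, le_div_iff₀ hs]
      nlinarith [hsq, hts, hB, hs, hnp, ht]
  have hconc1 : 0 < smallestSV W →
      euclNorm ((projMat W).mulVec u) / nu ≤ (S / nu + ε * op) / smallestSV W := by
    intro hs
    have h1 := hcore hs
    have heq : (S / nu + ε * op) / smallestSV W = ((S + ε * op * nu) / smallestSV W) / nu := by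
      rw [div_add' _ _ _ hnu0.ne', div_div, div_div, mul_comm nu (smallestSV W)]
    rw [heq]
    gcongr
  refine ⟨hconc1, ?_⟩
  intro hI
  set I := sInf ((fun v => euclNorm (W.transpose.mulVec v)) '' (N : Set (Fin m → ℝ))) with hIdef
  have hIbddBelow : BddBelow ((fun v => euclNorm (W.transpose.mulVec v)) '' (N : Set (Fin m → ℝ))) := by
    refine ⟨0, fun r hr => ?_⟩
    obtain ⟨v, hv, rfl⟩ := hr
    exact euclNorm_nonneg _
  have hsge : I - ε * op ≤ smallestSV W := by
    refine le_csInf ⟨euclNorm (W.transpose.mulVec v₀), ⟨v₀, hv₀, rfl⟩⟩ ?_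
    rintro r ⟨v, hv, rfl⟩
    obtain ⟨v', hv', hvv'⟩ := hnet v hv
    have hI' : I ≤ euclNorm (W.transpose.mulVec v') := csInf_le hIbddBelow ⟨v', hv', rfl⟩
    have hsplit : W.transpose.mulVec v' = W.transpose.mulVec v - W.transpose.mulVec (v - v') := by
      have hvv : v - (v - v') = v' := by abel
      rw [← Matrix.mulVec_sub, hvv]
    have h2 : euclNorm (W.transpose.mulVec (v - v')) ≤ op * ε :=
      le_trans (transpose_mulVec_le_opNorm W _) (mul_le_mul_of_nonneg_left hvv' hopnn)
    have h3 : euclNorm (W.transpose.mulVec v') ≤ euclNorm (W.transpose.mulVec v) + op * ε := by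
      rw [hsplit]
      exact le_trans (euclNorm_sub_le _ _) (by linarith)
    linarith
  have hs : 0 < smallestSV W := lt_of_lt_of_le hI hsge
  have hA : 0 ≤ S / nu + ε * op := by positivity
  exact (hconc1 hs).trans (by gcongr)

end
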